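/- Let r ≥ 2, q ≥ 1, and let f : ℤ → ZMod r be a q-periodic function. Then f is polyfractal if and only if for every prime p dividing r, the composition of f with the natural reduction map ZMod r → ZMod(p^{v_p(r)}) is p^{v_p(q)}-periodic, where v_p denotes the p-adic valuation. (This is the classification of polyfractal maps between finite cyclic groups: the polyfractal maps ℤ_q → ℤ_r are exactly the maps whose p-primary components depend only on the corresponding p-primary component of the argument.) -/

import Mathlib

set_option linter.unusedSectionVars false

/-- The integer binomial coefficient `binom(x,δ) = x(x-1)⋯(x-δ+1)/δ!`. -/
noncomputable def ibinom (x : ℤ) (δ : ℕ) : ℤ := Ring.choose x δ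

namespace PolyAux

noncomputable def sOp (R : Type*) [CommRing R] : Module.End R (ℤ → R) :=
  LinearMap.funLeft R R (· + 1)

noncomputable def dOp (R : Type*) [CommRing R] : Module.End R (ℤ → R) := sOp R - 1


open Finset

variable {R : Type*} [CommRing R]

lemma sOp_apply (g : ℤ → R) (x : ℤ) : sOp R g x = g (x + 1) := rfl

lemma dOp_apply (g : ℤ → R) (x : ℤ) : dOp R g x = g (x + 1) - g x := by
  simp [dOp, sOp, LinearMap.sub_apply]

lemma sOp_pow_apply (n : ℕ) (g : ℤ → R) (x : ℤ) : (sOp R ^ n) g x = g (x + n) := by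
  induction n generalizing x with
  | zero => simp [pow_zero, Module.End.one_apply]
  | succ n ih =>
    rw [pow_succ', Module.End.mul_apply]
    have : sOp R ((sOp R ^ n) g) x = (sOp R ^ n) g (x + 1) := rfl
    rw [this, ih]
    push_cast; ring_nf

/-- binomial basis functions -/
noncomputable def B (R : Type*) [CommRing R] (δ : ℕ) : ℤ → R := fun x => ((ibinom x δ : ℤ) : R)

lemma B_zero (x : ℤ) : B R 0 x = 1 := by
  simp [B, ibinom, Ring.choose_zero_right]

lemma dOp_B_zero : dOp R (B R 0) = 0 := by
  funext x
  simp [dOp_apply, B_zero]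

lemma dOp_B_succ (δ : ℕ) : dOp R (B R (δ + 1)) = B R δ := by
  funext x
  rw [dOp_apply]
  have h : ibinom (x + 1) (δ + 1) = ibinom x δ + ibinom x (δ + 1) := Ring.choose_succ_succ x δ
  simp only [B]
  rw [h]
  push_cast
  ring

lemma dOp_pow_B (δ : ℕ) : (dOp R ^ (δ + 1)) (B R δ) = 0 := by
  induction δ with
  | zero => simpa [pow_one] using dOp_B_zero (R := R)
  | succ δ ih =>
    rw [pow_succ, Module.End.mul_apply, dOp_B_succ, ih]

lemma dOp_pow_zero_of_le {D n : ℕ} (h : D ≤ n) {g : ℤ → R} (hg : (dOp R ^ D) g = 0) :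
    (dOp R ^ n) g = 0 := by
  rw [← Nat.sub_add_cancel h, pow_add, Module.End.mul_apply, hg, map_zero]

lemma exists_pow_diff_zero (c : ℕ →₀ R) (f : ℤ → R)
    (hf : ∀ x : ℤ, f x = c.sum fun δ a => ((ibinom x δ : ℤ) : R) * a) :
    ∃ D : ℕ, (dOp R ^ D) f = 0 := by
  refine ⟨c.support.sup id + 1, ?_⟩
  have hf' : f = ∑ δ ∈ c.support, c δ • B R δ := by
    funext x
    rw [hf x, Finsupp.sum, Finset.sum_apply]
    refine Finset.sum_congr rfl fun δ _ => ?_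
    simp [B, mul_comm]
  rw [hf', map_sum]
  refine Finset.sum_eq_zero fun δ hδ => ?_
  rw [map_smul]
  have : (dOp R ^ (c.support.sup id + 1)) (B R δ) = 0 :=
    dOp_pow_zero_of_le (by have := Finset.le_sup (f := id) hδ; simpa using Nat.succ_le_succ this)
      (dOp_pow_B δ)
  rw [this, smul_zero]

lemma const_of_diff (u : ℤ → R) (h : ∀ x : ℤ, u (x + 1) = u x) : ∀ x : ℤ, u x = u 0 := by
  intro x
  induction x using Int.induction_on with
  | zero => rfl
  | succ i ih => rw [h, ih]
  | pred i ih => rw [← ih, ← h (-(i : ℤ) - 1)]; ring_nf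

lemma polyfractal_of_diff_pow_zero :
    ∀ (D : ℕ) (g : ℤ → R), (dOp R ^ D) g = 0 →
      ∃ c : ℕ →₀ R, ∀ x : ℤ, g x = c.sum fun δ a => ((ibinom x δ : ℤ) : R) * a := by
  intro D
  induction D with
  | zero =>
    intro g hg
    refine ⟨0, fun x => ?_⟩
    rw [Finsupp.sum_zero_index]
    have : g x = (0 : ℤ → R) x := by rw [← hg]; simp [pow_zero, Module.End.one_apply]
    simpa using this
  | succ D ih =>
    intro g hg
    have hDg : (dOp R ^ D) (dOp R g) = 0 := by
      rw [← Module.End.mul_apply, ← pow_succ, hg]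
    obtain ⟨c, hc⟩ := ih (dOp R g) hDg
    set c' : ℕ →₀ R := Finsupp.mapDomain Nat.succ c with hc'
    set h₀ : ℤ → R := fun x => c'.sum fun δ a => ((ibinom x δ : ℤ) : R) * a with hh₀
    have hsum : ∀ y : ℤ, h₀ y = c.sum fun δ a => ((ibinom y (δ + 1) : ℤ) : R) * a := by
      intro y
      rw [hh₀]
      exact Finsupp.sum_mapDomain_index_inj (fun a b hab => Nat.succ_injective hab)
    have hΔ : ∀ x : ℤ, dOp R h₀ x = dOp R g x := by
      intro x
      rw [dOp_apply, hsum, hsum, hc x, Finsupp.sum, Finsupp.sum, Finsupp.sum,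
        ← Finset.sum_sub_distrib]
      refine Finset.sum_congr rfl fun δ _ => ?_
      have h : ibinom (x + 1) (δ + 1) = ibinom x δ + ibinom x (δ + 1) := Ring.choose_succ_succ x δ
      rw [← sub_mul]
      congr 1
      rw [h]
      push_cast
      ring
    have hconst : ∀ x : ℤ, g x - h₀ x = g 0 - h₀ 0 := by
      refine const_of_diff (fun y => g y - h₀ y) fun x => ?_
      have h1 := hΔ x
      rw [dOp_apply, dOp_apply] at h1
      show g (x + 1) - h₀ (x + 1) = g x - h₀ x
      linear_combination -h1
    refine ⟨Finsupp.single 0 (g 0 - h₀ 0) + c', fun x => ?_⟩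
    rw [Finsupp.sum_add_index' (fun δ => by simp) (fun δ b₁ b₂ => by ring),
      Finsupp.sum_single_index (by simp)]
    have hB0 : ((ibinom x 0 : ℤ) : R) = 1 := B_zero x
    rw [hB0, one_mul]
    have hx := hconst x
    have : g x = (g 0 - h₀ 0) + h₀ x := by linear_combination hx
    rw [this]

lemma shift_eq_sum_diff (n : ℕ) (g : ℤ → R) (x : ℤ) :
    g (x + n) = ∑ j ∈ range (n + 1), ((n.choose j : ℕ) : R) * (dOp R ^ j) g x := by
  have hS : sOp R = dOp R + 1 := by rw [dOp, sub_add_cancel]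
  have hcomm : Commute (dOp R) (1 : Module.End R (ℤ → R)) := Commute.one_right _
  have hexp := hcomm.add_pow n
  rw [← sOp_pow_apply n g x, hS, hexp]
  rw [LinearMap.sum_apply, Finset.sum_apply]
  refine Finset.sum_congr rfl fun j hj => ?_
  rw [one_pow, mul_one, Module.End.mul_apply]
  have h1 : ((n.choose j : ℕ) : Module.End R (ℤ → R)) g = (n.choose j : ℕ) • g :=
    Module.End.natCast_apply _ _
  rw [h1, map_nsmul]
  simp [nsmul_eq_mul]

/-- Alternating expansion of the difference power in terms of shifts. -/
lemma diff_pow_eq_sum_shift (n : ℕ) (g : ℤ → R) (x : ℤ) :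
    (dOp R ^ n) g x =
      ∑ j ∈ range (n + 1), ((-1 : ℤ) ^ (n - j) * (n.choose j : ℕ)) • g (x + j) := by
  have hcomm : Commute (sOp R) (-1 : Module.End R (ℤ → R)) := by exact (Commute.one_right (sOp R)).neg_right
  have hexp := hcomm.add_pow n
  rw [dOp, sub_eq_add_neg, hexp, LinearMap.sum_apply, Finset.sum_apply]
  refine Finset.sum_congr rfl fun j hj => ?_
  have hneg : ((-1 : Module.End R (ℤ → R)) ^ (n - j)) = (((-1 : ℤ) ^ (n - j) : ℤ) : Module.End R (ℤ → R)) := by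
    push_cast
    rfl
  rw [Module.End.mul_apply, Module.End.mul_apply, hneg]
  have h1 : ((n.choose j : ℕ) : Module.End R (ℤ → R)) g = (n.choose j : ℕ) • g :=
    Module.End.natCast_apply _ _
  have h2 : ∀ v : ℤ → R, (((-1 : ℤ) ^ (n - j) : ℤ) : Module.End R (ℤ → R)) v
      = ((-1 : ℤ) ^ (n - j)) • v := fun v => Module.End.intCast_apply _ _
  have h3 : (n.choose j) • g (x + (j : ℤ)) = ((n.choose j : ℤ)) • g (x + (j : ℤ)) :=
    (natCast_zsmul _ _).symm
  rw [h1, h2, map_zsmul, map_nsmul, Pi.smul_apply, Pi.smul_apply, sOp_pow_apply, h3, smul_smul]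

lemma pow_dvd_choose_pow {p e D K j : ℕ} (hp : p.Prime) (hj0 : j ≠ 0) (hjD : j < D)
    (hK : e + D ≤ K) : p ^ e ∣ (p ^ K).choose j := by
  have hjK : j ≤ p ^ K := by
    have h1 : K < p ^ K := Nat.lt_pow_self hp.one_lt
    omega
  have hmult := Nat.Prime.emultiplicity_choose_prime_pow hp hjK hj0
  have hfac : multiplicity p j = j.factorization p := Nat.multiplicity_eq_factorization hp hj0
  have hlt : multiplicity p j < D := by
    rw [hfac]
    exact lt_of_lt_of_le (Nat.factorization_lt p hj0) (le_of_lt hjD)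
  apply pow_dvd_of_le_emultiplicity
  rw [hmult]
  exact_mod_cast (by omega : e ≤ K - multiplicity p j)

lemma periodic_pow_of_diff (p e D K : ℕ) (hp : p.Prime) (g : ℤ → ZMod (p ^ e))
    (hD : (dOp (ZMod (p ^ e)) ^ D) g = 0) (hK : e + D ≤ K) :
    ∀ x : ℤ, g (x + ((p ^ K : ℕ) : ℤ)) = g x := by
  intro x
  rw [shift_eq_sum_diff (p ^ K) g x]
  rw [Finset.sum_eq_single_of_mem 0 (Finset.mem_range.mpr (by omega))]
  · simp [pow_zero, Module.End.one_apply]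
  · intro j hj hj0
    by_cases hjD : j < D
    · have hdvd : p ^ e ∣ (p ^ K).choose j := pow_dvd_choose_pow hp hj0 hjD hK
      have : (((p ^ K).choose j : ℕ) : ZMod (p ^ e)) = 0 :=
        (ZMod.natCast_eq_zero_iff _ _).mpr hdvd
      rw [this, zero_mul]
    · have : (dOp (ZMod (p ^ e)) ^ j) g = 0 := dOp_pow_zero_of_le (by omega) hD
      rw [this]
      simp

lemma dOp_periodic {t : ℤ} {g : ℤ → R} (hg : ∀ x : ℤ, g (x + t) = g x) :
    ∀ x : ℤ, dOp R g (x + t) = dOp R g x := by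
  intro x
  rw [dOp_apply, dOp_apply]
  have h1 : x + t + 1 = x + 1 + t := by ring
  rw [h1, hg, hg]

lemma dOp_pow_periodic {t : ℤ} {g : ℤ → R} (hg : ∀ x : ℤ, g (x + t) = g x) (n : ℕ) :
    ∀ x : ℤ, (dOp R ^ n) g (x + t) = (dOp R ^ n) g x := by
  induction n with
  | zero => intro x; simp [pow_zero, Module.End.one_apply, hg x]
  | succ n ih =>
    intro x
    rw [pow_succ', Module.End.mul_apply]
    exact dOp_periodic ih x

lemma step_ideal (p m e : ℕ) (hp : p.Prime) (J : Ideal (ZMod (p ^ e)))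
    (u : ℤ → ZMod (p ^ e)) (hper : ∀ x : ℤ, u (x + ((p ^ m : ℕ) : ℤ)) = u x)
    (hu : ∀ x : ℤ, u x ∈ J) :
    ∀ x : ℤ, (dOp (ZMod (p ^ e)) ^ (p ^ m)) u x ∈ Ideal.span {(p : ZMod (p ^ e))} * J := by
  intro x
  have hpI : (p : ZMod (p ^ e)) ∈ Ideal.span {(p : ZMod (p ^ e))} := Ideal.subset_span rfl
  have key : ∀ (z : ℤ) (v : ZMod (p ^ e)), (p : ℤ) ∣ z → v ∈ J →
      z • v ∈ Ideal.span {(p : ZMod (p ^ e))} * J := by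
    intro z v hz hv
    obtain ⟨w, rfl⟩ := hz
    have h1 : ((p : ℤ) * w) • v = (w : ZMod (p ^ e)) * ((p : ZMod (p ^ e)) * v) := by
      rw [zsmul_eq_mul]; push_cast; ring
    rw [h1]
    exact Ideal.mul_mem_left _ _ (Ideal.mul_mem_mul hpI hv)
  rw [diff_pow_eq_sum_shift]
  set n := p ^ m with hn
  have hn1 : 1 ≤ n := Nat.one_le_pow _ _ hp.pos
  set T : ℕ → ZMod (p ^ e) := fun j => ((-1 : ℤ) ^ (n - j) * ((n.choose j : ℕ) : ℤ)) • u (x + j)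
    with hT
  have hsplit : ∑ j ∈ range (n + 1), T j = (T 0 + T n) + ∑ j ∈ Ico 1 n, T j := by
    rw [Finset.range_eq_Ico, Finset.sum_eq_sum_Ico_succ_bot (by omega : 0 < n + 1),
      Finset.sum_Ico_succ_top (by omega : 1 ≤ n)]
    ring
  show ∑ j ∈ range (n + 1), T j ∈ _
  rw [hsplit]
  refine add_mem ?_ (Submodule.sum_mem _ fun j hj => ?_)
  · have hTn : T n = u x := by
      have hx : x + ((n : ℕ) : ℤ) = x + ((p ^ m : ℕ) : ℤ) := by rw [hn]
      simp only [hT, Nat.sub_self, pow_zero, Nat.choose_self, Nat.cast_one, one_mul, hx,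
        hper x, one_smul]
      exact hper x
    have hT0 : T 0 = ((-1 : ℤ) ^ n) • u x := by
      simp [hT, Nat.choose_zero_right]
    have hsum : T 0 + T n = (((-1 : ℤ) ^ n + 1)) • u x := by
      rw [hTn, hT0, add_smul, one_smul]
    rw [hsum]
    refine key _ _ ?_ (hu x)
    rcases Nat.even_or_odd n with hev | hod
    · have h2 : (2 : ℕ) ∣ n := hev.two_dvd
      have hp2 : p = 2 := ((Nat.prime_dvd_prime_iff_eq Nat.prime_two hp).mp
        (Nat.Prime.dvd_of_dvd_pow Nat.prime_two (hn ▸ h2))).symm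
      rw [hev.neg_one_pow]
      rw [hp2]
      norm_num
    · rw [hod.neg_one_pow]
      simp
  · simp only [Finset.mem_Ico] at hj
    have hdvd : p ∣ n.choose j := by
      rw [hn]
      exact Nat.Prime.dvd_choose_pow hp (by omega) (by rw [← hn]; omega)
    refine key _ _ ?_ (hu (x + j))
    exact Dvd.dvd.mul_left (Int.natCast_dvd_natCast.mpr hdvd) _

lemma diff_pow_zero_of_periodic (p e m : ℕ) (hp : p.Prime) (g : ℤ → ZMod (p ^ e))
    (hper : ∀ x : ℤ, g (x + ((p ^ m : ℕ) : ℤ)) = g x) :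
    (dOp (ZMod (p ^ e)) ^ (e * p ^ m)) g = 0 := by
  set I := Ideal.span {(p : ZMod (p ^ e))} with hI
  have main : ∀ k : ℕ, ∀ x : ℤ, (dOp (ZMod (p ^ e)) ^ (k * p ^ m)) g x ∈ I ^ k := by
    intro k
    induction k with
    | zero =>
      intro x
      simp only [pow_zero, Ideal.one_eq_top]
      exact Submodule.mem_top
    | succ k ih =>
      intro x
      have hu : ∀ y : ℤ, (dOp (ZMod (p ^ e)) ^ (k * p ^ m)) g (y + ((p ^ m : ℕ) : ℤ)) =
          (dOp (ZMod (p ^ e)) ^ (k * p ^ m)) g y := dOp_pow_periodic hper _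
      have hstep := step_ideal p m e hp (I ^ k) _ hu ih x
      have heq : (dOp (ZMod (p ^ e)) ^ (p ^ m)) ((dOp (ZMod (p ^ e)) ^ (k * p ^ m)) g) =
          (dOp (ZMod (p ^ e)) ^ ((k + 1) * p ^ m)) g := by
        rw [← Module.End.mul_apply, ← pow_add]
        congr 1
        ring
      rw [heq] at hstep
      rwa [pow_succ, mul_comm (I ^ k) I]
  funext x
  have hx := main e x
  have hIe : I ^ e = Ideal.span {(p : ZMod (p ^ e)) ^ e} := Ideal.span_singleton_pow _ _
  have hz : (p : ZMod (p ^ e)) ^ e = 0 := by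
    rw [← Nat.cast_pow, ZMod.natCast_self]
  rw [hIe, hz] at hx
  have := Ideal.mem_span_singleton.mp hx
  simpa using zero_dvd_iff.mp this

lemma hom_dOp_pow {S : Type*} [CommRing S] (π : R →+* S) (g : ℤ → R) (n : ℕ) :
    (dOp S ^ n) (fun x => π (g x)) = fun x => π ((dOp R ^ n) g x) := by
  induction n with
  | zero => simp [pow_zero, Module.End.one_apply]
  | succ n ih =>
    rw [pow_succ', pow_succ', Module.End.mul_apply, Module.End.mul_apply, ih]
    funext x
    rw [dOp_apply, dOp_apply, map_sub]

lemma per_int {M : Type*} (u : ℤ → M) (t : ℤ) (h : ∀ x : ℤ, u (x + t) = u x) :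
    ∀ (z : ℤ) (x : ℤ), u (x + t * z) = u x := by
  have hneg : ∀ x : ℤ, u (x - t) = u x := by
    intro x
    have := h (x - t)
    rw [sub_add_cancel] at this
    exact this.symm
  intro z
  induction z using Int.induction_on with
  | zero => simp
  | succ i ih =>
    intro x
    have h1 : x + t * ((i : ℤ) + 1) = (x + t * i) + t := by ring
    rw [h1, h, ih]
  | pred i ih =>
    intro x
    have h1 : x + t * (-(i : ℤ) - 1) = (x + t * (-(i : ℤ))) - t := by ring
    rw [h1, hneg, ih]

lemma gcd_eq_ordProj {p q K : ℕ} (hp : p.Prime) (hq : q ≠ 0) (hK : q.factorization p ≤ K) :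
    Nat.gcd q (p ^ K) = p ^ (q.factorization p) := by
  obtain ⟨j, hj, hgj⟩ := (Nat.dvd_prime_pow hp).mp (Nat.gcd_dvd_right q (p ^ K))
  have h1 : p ^ (q.factorization p) ∣ Nat.gcd q (p ^ K) :=
    Nat.dvd_gcd (Nat.ordProj_dvd q p) (pow_dvd_pow p hK)
  have h2 : q.factorization p ≤ j := by
    rw [hgj] at h1
    exact (Nat.pow_dvd_pow_iff_le_right hp.one_lt).mp h1
  have h3 : j ≤ q.factorization p := by
    refine (Nat.Prime.pow_dvd_iff_le_factorization hp hq).mp ?_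
    rw [← hgj]
    exact Nat.gcd_dvd_left _ _
  rw [hgj]
  congr 1
  omega

lemma zmod_eq_zero_of_reductions {r : ℕ} (hr : r ≠ 0) (a : ZMod r)
    (h : ∀ p : ℕ, p.Prime → p ∣ r →
      ZMod.castHom (Nat.ordProj_dvd r p) (ZMod (p ^ (r.factorization p))) a = 0) : a = 0 := by
  haveI : NeZero r := ⟨hr⟩
  have hna : ((a.val : ℕ) : ZMod r) = a := ZMod.natCast_rightInverse a
  set n := a.val with hn
  by_cases hn0 : n = 0
  · rw [← hna, hn0, Nat.cast_zero]
  · have hdvd : r ∣ n := by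
      rw [← Nat.factorization_le_iff_dvd hr hn0]
      intro p
      by_cases hp : p.Prime
      · by_cases hpr : p ∣ r
        · have h1 := h p hp hpr
          rw [← hna, map_natCast] at h1
          have h2 : p ^ (r.factorization p) ∣ n :=
            (ZMod.natCast_eq_zero_iff _ _).mp h1
          exact (Nat.Prime.pow_dvd_iff_le_factorization hp hn0).mp h2
        · simp [Nat.factorization_eq_zero_of_not_dvd hpr]
      · simp [Nat.factorization_eq_zero_of_not_prime _ hp]
    rw [← hna]
    exact (ZMod.natCast_eq_zero_iff _ _).mpr hdvd

end PolyAux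

open PolyAux in
/-- Classification of polyfractal maps between finite cyclic groups: a `q`-periodic map
`f : ℤ → ZMod r` is polyfractal iff for every prime `p` dividing `r`, the reduction of
`f` modulo `p^{v_p(r)}` is `p^{v_p(q)}`-periodic. -/
theorem stmt_19 (r q : ℕ) (hr : 2 ≤ r) (hq : 1 ≤ q) (f : ℤ → ZMod r)
    (hper : ∀ x : ℤ, f (x + (q : ℕ)) = f x) :
    (∃ c : ℕ →₀ ZMod r,
      ∀ x : ℤ, f x = c.sum fun δ a => ((ibinom x δ : ℤ) : ZMod r) * a) ↔
      (∀ p : ℕ, p.Prime → p ∣ r →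
        ∀ x : ℤ,
          ZMod.castHom (Nat.ordProj_dvd r p) (ZMod (p ^ (r.factorization p)))
              (f (x + (p ^ (q.factorization p) : ℕ))) =
            ZMod.castHom (Nat.ordProj_dvd r p) (ZMod (p ^ (r.factorization p))) (f x)) := by
  constructor
  · rintro ⟨c, hc⟩ p hp hpr x
    set e := r.factorization p with he
    set m := q.factorization p with hm
    set π := ZMod.castHom (Nat.ordProj_dvd r p) (ZMod (p ^ e)) with hπ
    set g : ℤ → ZMod (p ^ e) := fun y => π (f y) with hg
    obtain ⟨D, hD⟩ := exists_pow_diff_zero c f hc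
    have hDg : (dOp (ZMod (p ^ e)) ^ D) g = 0 := by
      rw [hg, hom_dOp_pow π f D, hD]
      funext y
      simp
    set K := e + D + m with hK
    have hper1 : ∀ y : ℤ, g (y + ((p ^ K : ℕ) : ℤ)) = g y :=
      periodic_pow_of_diff p e D K hp g hDg (by omega)
    have hper2 : ∀ y : ℤ, g (y + ((q : ℕ) : ℤ)) = g y := fun y => congrArg π (hper y)
    have hq0 : q ≠ 0 := by omega
    have hgcd : Nat.gcd q (p ^ K) = p ^ m := gcd_eq_ordProj hp hq0 (by omega)
    have hb := Int.gcd_eq_gcd_ab (q : ℤ) ((p ^ K : ℕ) : ℤ)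
    set A := Int.gcdA (q : ℤ) ((p ^ K : ℕ) : ℤ) with hA
    set B := Int.gcdB (q : ℤ) ((p ^ K : ℕ) : ℤ) with hB
    have hrepr : ((p ^ m : ℕ) : ℤ) = (q : ℤ) * A + ((p ^ K : ℕ) : ℤ) * B := by
      rw [← hgcd]
      push_cast
      rw [← Int.gcd_natCast_natCast q (p ^ K)]
      push_cast at hb ⊢
      linarith [hb]
    show g (x + ((p ^ m : ℕ) : ℤ)) = g x
    calc g (x + ((p ^ m : ℕ) : ℤ))
        = g ((x + ((p ^ K : ℕ) : ℤ) * B) + (q : ℤ) * A) := by rw [hrepr]; ring_nf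
      _ = g (x + ((p ^ K : ℕ) : ℤ) * B) := per_int g (q : ℤ) hper2 A _
      _ = g x := per_int g ((p ^ K : ℕ) : ℤ) hper1 B x
  · intro h
    have hr0 : r ≠ 0 := by omega
    set N := r * q with hN
    have hdN : (dOp (ZMod r) ^ N) f = 0 := by
      funext x
      apply zmod_eq_zero_of_reductions hr0
      intro p hp hpr
      set e := r.factorization p with he
      set m := q.factorization p with hm
      set π := ZMod.castHom (Nat.ordProj_dvd r p) (ZMod (p ^ e)) with hπ
      have hperg : ∀ y : ℤ, (fun z => π (f z)) (y + ((p ^ m : ℕ) : ℤ)) =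
          (fun z => π (f z)) y := fun y => h p hp hpr y
      have hzero : (dOp (ZMod (p ^ e)) ^ (e * p ^ m)) (fun z => π (f z)) = 0 :=
        diff_pow_zero_of_periodic p e m hp _ hperg
      have hle : e * p ^ m ≤ N := by
        have h1 : e < r := Nat.factorization_lt p hr0
        have h2 : p ^ m ≤ q := Nat.le_of_dvd (by omega) (Nat.ordProj_dvd q p)
        calc e * p ^ m ≤ e * q := Nat.mul_le_mul_left _ h2
          _ ≤ r * q := Nat.mul_le_mul_right _ (le_of_lt h1)
      have hzero' : (dOp (ZMod (p ^ e)) ^ N) (fun z => π (f z)) = 0 :=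
        dOp_pow_zero_of_le hle hzero
      rw [hom_dOp_pow π f N] at hzero'
      simpa using congrFun hzero' x
    exact polyfractal_of_diff_pow_zero N f hdN
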